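/- arXiv:1804.10944 — 3 statements merged into one kernel-verified Lean document; each statement's English description precedes it below -/
import Mathlib

section
/- For each N, define the truncation errors R^{n+1}_{Δt} = v(t_n) − S(Δt)(v(t_{n+1}) − Δt·G(t_{n+1}, v(t_{n+1}))) for n = 0, …, N−1. Then the scheme is consistent: ∑_{n=0}^{N−1} ‖R^{n+1}_{Δt}‖ → 0 as N → ∞. -/
open MeasureTheory Filter intervalIntegral

/-!
Writing `a = t_n`, `b = t_{n+1}` and `Δt = b - a`, the mild formula turns the truncation error into
`∫_a^b (Φ(Δt, b) - Φ(τ - a, τ)) dτ` with `Φ(σ, τ) = S(σ) G(τ, v(τ))`. Strong continuity of the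
semigroup, its uniform bound on `[0, T]` and the Lipschitz bound on `G` make `Φ` jointly continuous,
hence uniformly continuous on the compact square `[0, T]²`. Both arguments of `Φ` differ by at most
`Δt`, so each error is `o(Δt)` uniformly in `n`, and the `N` errors sum to `T · o(1)`.
-/

open Set Topology

section Operators

variable {𝕜 E F : Type*} [NontriviallyNormedField 𝕜] [NormedAddCommGroup E] [NormedSpace 𝕜 E]
  [NormedAddCommGroup F] [NormedSpace 𝕜 F]

theorem continuousOn_prod_apply_of_norm_le {X Y : Type*} [TopologicalSpace X] [TopologicalSpace Y]
    {S : X → E →L[𝕜] F} {g : Y → E} {s : Set X} {t : Set Y} {M : ℝ}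
    (hS : ∀ f, ContinuousOn (fun x => S x f) s) (hSM : ∀ x ∈ s, ‖S x‖ ≤ M)
    (hg : ContinuousOn g t) :
    ContinuousOn (fun p : X × Y => S p.1 (g p.2)) (s ×ˢ t) := by
  rintro ⟨x₀, y₀⟩ ⟨hx₀, hy₀⟩
  have hg' : ContinuousWithinAt (fun p : X × Y => g p.2) (s ×ˢ t) (x₀, y₀) :=
    (hg y₀ hy₀).comp continuousWithinAt_snd fun _ hp => hp.2
  have hS' : ContinuousWithinAt (fun p : X × Y => S p.1 (g y₀)) (s ×ˢ t) (x₀, y₀) :=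
    (hS (g y₀) x₀ hx₀).comp (g := fun x => S x (g y₀)) continuousWithinAt_fst fun _ hp => hp.1
  rw [ContinuousWithinAt, tendsto_iff_norm_sub_tendsto_zero] at hg' hS' ⊢
  refine squeeze_zero' (Eventually.of_forall fun _ => norm_nonneg _)
    (eventually_nhdsWithin_of_forall fun p hp => ?_) (by simpa using (hg'.const_mul M).add hS')
  calc ‖S p.1 (g p.2) - S x₀ (g y₀)‖
      = ‖S p.1 (g p.2 - g y₀) + (S p.1 (g y₀) - S x₀ (g y₀))‖ := by rw [map_sub]; abel_nf
    _ ≤ M * ‖g p.2 - g y₀‖ + ‖S p.1 (g y₀) - S x₀ (g y₀)‖ :=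
      (norm_add_le _ _).trans (add_le_add_left ((S p.1).le_of_opNorm_le (hSM _ hp.1) _) _)

variable {S : ℝ → E →L[𝕜] E} {T M : ℝ}

theorem norm_semigroup_apply_sub_le
    (hSadd : ∀ s t : ℝ, 0 ≤ s → 0 ≤ t → S (t + s) = (S t).comp (S s))
    (hSM : ∀ t ∈ Icc 0 T, ‖S t‖ ≤ M) {a b : ℝ} (ha : a ∈ Icc 0 T) (hb : b ∈ Icc 0 T) (f : E) :
    ‖S b f - S a f‖ ≤ M * ‖S |b - a| f - f‖ := by
  wlog hab : a ≤ b generalizing a b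
  · rw [norm_sub_rev, abs_sub_comm]
    exact this hb ha (le_of_not_ge hab)
  have hSb : S b = (S a).comp (S (b - a)) := by
    rw [← hSadd (b - a) a (sub_nonneg.2 hab) ha.1, add_sub_cancel]
  rw [abs_of_nonneg (sub_nonneg.2 hab), hSb, ContinuousLinearMap.comp_apply, ← map_sub]
  exact (S a).le_of_opNorm_le (hSM a ha) _

theorem continuousOn_semigroup_apply (hS0 : S 0 = ContinuousLinearMap.id 𝕜 E)
    (hSadd : ∀ s t : ℝ, 0 ≤ s → 0 ≤ t → S (t + s) = (S t).comp (S s))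
    (hScont : ∀ f : E, Tendsto (fun t : ℝ => S t f) (𝓝[>] 0) (𝓝 f))
    (hSM : ∀ t ∈ Icc 0 T, ‖S t‖ ≤ M) (f : E) :
    ContinuousOn (fun t => S t f) (Icc 0 T) := by
  have h0 : Tendsto (fun t => ‖S t f - f‖) (𝓝[≥] 0) (𝓝 0) := by
    have : ContinuousWithinAt (fun t => S t f) (Ioi 0) 0 := by
      simpa [ContinuousWithinAt, hS0] using hScont f
    simpa [ContinuousWithinAt, hS0, tendsto_iff_norm_sub_tendsto_zero] using
      continuousWithinAt_Ioi_iff_Ici.1 this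
  intro t₀ ht₀
  have habs : Tendsto (fun t => |t - t₀|) (𝓝[Icc 0 T] t₀) (𝓝[≥] 0) :=
    tendsto_nhdsWithin_iff.2 ⟨((continuous_abs.comp (continuous_sub_right t₀)).tendsto' t₀ 0
      (by simp)).mono_left nhdsWithin_le_nhds,
      Eventually.of_forall fun _ => mem_Ici.2 (abs_nonneg _)⟩
  rw [ContinuousWithinAt, tendsto_iff_norm_sub_tendsto_zero]
  refine squeeze_zero' (Eventually.of_forall fun _ => norm_nonneg _)
    (eventually_nhdsWithin_of_forall fun t ht => norm_semigroup_apply_sub_le hSadd hSM ht₀ ht f)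
    (by simpa using (h0.comp habs).const_mul M)

end Operators

theorem continuousOn_apply_of_norm_sub_le {E F : Type*} [SeminormedAddCommGroup E]
    [SeminormedAddCommGroup F] {G : ℝ → E → F} {v : ℝ → E} {s : Set ℝ} {L : ℝ}
    (hG : ∀ t₁ ∈ s, ∀ t₂ ∈ s, ∀ u w : E, ‖G t₁ u - G t₂ w‖ ≤ L * (|t₁ - t₂| + ‖u - w‖))
    (hv : ContinuousOn v s) :
    ContinuousOn (fun t => G t (v t)) s := by
  intro t₀ ht₀
  have ht : Tendsto (fun t => |t - t₀|) (𝓝[s] t₀) (𝓝 0) :=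
    ((continuous_abs.comp (continuous_sub_right t₀)).tendsto' t₀ 0 (by simp)).mono_left
      nhdsWithin_le_nhds
  have hv' := tendsto_iff_norm_sub_tendsto_zero.1 (hv t₀ ht₀)
  rw [ContinuousWithinAt, tendsto_iff_norm_sub_tendsto_zero]
  exact squeeze_zero' (Eventually.of_forall fun _ => norm_nonneg _)
    (eventually_nhdsWithin_of_forall fun t ht => hG t ht t₀ ht₀ _ _)
    (by simpa using (ht.add hv').const_mul L)

section Truncation

variable {E : Type*} [NormedAddCommGroup E] [NormedSpace ℝ E] [CompleteSpace E]
  {S : ℝ → E →L[ℝ] E} {g v : ℝ → E} {a b : ℝ}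

theorem sub_semigroup_step_eq_integral
    (hmild : v a = S (b - a) (v b) - ∫ τ in a..b, S (τ - a) (g τ))
    (hint : IntervalIntegrable (fun τ => S (τ - a) (g τ)) volume a b) :
    v a - S (b - a) (v b - (b - a) • g b) = ∫ τ in a..b, (S (b - a) (g b) - S (τ - a) (g τ)) := by
  rw [integral_sub intervalIntegrable_const hint, intervalIntegral.integral_const, hmild, map_sub,
    map_smul]
  abel

theorem norm_sub_semigroup_step_le {T δ ε : ℝ}
    (hcont : ContinuousOn (fun p : ℝ × ℝ => S p.1 (g p.2)) (Icc 0 T ×ˢ Icc 0 T))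
    (hunif : ∀ x ∈ Icc 0 T ×ˢ Icc 0 T, ∀ y ∈ Icc 0 T ×ˢ Icc 0 T,
      dist x y < δ → dist (S x.1 (g x.2)) (S y.1 (g y.2)) < ε)
    (hmild : v a = S (b - a) (v b) - ∫ τ in a..b, S (τ - a) (g τ))
    (ha : 0 ≤ a) (hab : a ≤ b) (hbT : b ≤ T) (hδ : b - a < δ) :
    ‖v a - S (b - a) (v b - (b - a) • g b)‖ ≤ ε * (b - a) := by
  have hmem : ∀ τ ∈ Icc a b, (τ - a, τ) ∈ Icc 0 T ×ˢ Icc 0 T := fun τ hτ =>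
    ⟨⟨by linarith [hτ.1], by linarith [hτ.2]⟩, ⟨by linarith [hτ.1], by linarith [hτ.2]⟩⟩
  have hint : IntervalIntegrable (fun τ => S (τ - a) (g τ)) volume a b := by
    refine ContinuousOn.intervalIntegrable ?_
    rw [uIcc_of_le hab]
    exact hcont.comp (by fun_prop) hmem
  rw [sub_semigroup_step_eq_integral hmild hint]
  refine (intervalIntegral.norm_integral_le_of_norm_le_const fun τ hτ => ?_).trans_eq
    (by rw [abs_of_nonneg (sub_nonneg.2 hab)])
  rw [uIoc_of_le hab] at hτ
  have hclose : dist (b - a, b) (τ - a, τ) < δ := by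
    rw [Prod.dist_eq, Real.dist_eq, Real.dist_eq]
    exact max_lt (by rw [abs_lt]; constructor <;> linarith [hτ.1, hτ.2])
      (by rw [abs_lt]; constructor <;> linarith [hτ.1, hτ.2])
  rw [← dist_eq_norm]
  exact (hunif _ (hmem b ⟨hab, le_rfl⟩) _ (hmem τ (Ioc_subset_Icc_self hτ)) hclose).le

end Truncation

theorem tendsto_sum_range_of_le_mul_mesh {T : ℝ} (hT : 0 ≤ T) {f : ℕ → ℕ → ℝ}
    (hf0 : ∀ N n, 0 ≤ f N n) (hf : ∀ ε > 0, ∀ᶠ N in atTop, ∀ n < N, f N n ≤ ε * (T / N)) :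
    Tendsto (fun N => ∑ n ∈ Finset.range N, f N n) atTop (𝓝 0) := by
  refine tendsto_order.2 ⟨fun c hc => Eventually.of_forall fun N =>
    hc.trans_le (Finset.sum_nonneg fun n _ => hf0 N n), fun c hc => ?_⟩
  filter_upwards [hf (c / (T + 1)) (by positivity), eventually_gt_atTop 0] with N hN hN0
  calc ∑ n ∈ Finset.range N, f N n ≤ ∑ _n ∈ Finset.range N, c / (T + 1) * (T / N) :=
        Finset.sum_le_sum fun n hn => hN n (Finset.mem_range.1 hn)
    _ = c / (T + 1) * T := by
        rw [Finset.sum_const, Finset.card_range, nsmul_eq_mul]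
        field_simp
    _ < c := by
        rw [div_mul_eq_mul_div, div_lt_iff₀ (by positivity)]
        nlinarith

theorem explicit_scheme_consistency_general
    (d : ℕ) (T : ℝ) (hT : 0 < T)
    (S : ℝ → (Lp ℝ 2 (volume : Measure (Fin d → ℝ)) →L[ℝ]
              Lp ℝ 2 (volume : Measure (Fin d → ℝ))))
    (hS0 : S 0 = ContinuousLinearMap.id ℝ _)
    (hSadd : ∀ s t : ℝ, 0 ≤ s → 0 ≤ t → S (t + s) = (S t).comp (S s))
    (hScont : ∀ f : Lp ℝ 2 (volume : Measure (Fin d → ℝ)),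
      Tendsto (fun t : ℝ => S t f) (nhdsWithin 0 (Set.Ioi 0)) (nhds f))
    (M : ℝ) (hSM : ∀ t ∈ Set.Icc (0:ℝ) T, ‖S t‖ ≤ M)
    (L : ℝ)
    (G : ℝ → Lp ℝ 2 (volume : Measure (Fin d → ℝ)) → Lp ℝ 2 (volume : Measure (Fin d → ℝ)))
    (hG : ∀ t₁ ∈ Set.Icc (0:ℝ) T, ∀ t₂ ∈ Set.Icc (0:ℝ) T,
      ∀ u w : Lp ℝ 2 (volume : Measure (Fin d → ℝ)),
        ‖G t₁ u - G t₂ w‖ ≤ L * (|t₁ - t₂| + ‖u - w‖))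
    (v : ℝ → Lp ℝ 2 (volume : Measure (Fin d → ℝ)))
    (hv_cont : ContinuousOn v (Set.Icc 0 T))
    (hv_mild : ∀ s t : ℝ, 0 ≤ s → s ≤ t → t ≤ T →
      v s = S (t - s) (v t) - ∫ τ in s..t, S (τ - s) (G τ (v τ))) :
    Tendsto (fun N : ℕ => ∑ n ∈ Finset.range N,
      ‖v ((n : ℝ) * (T / N)) -
        S (T / N) (v (((n : ℝ) + 1) * (T / N)) -
          (T / N) • G (((n : ℝ) + 1) * (T / N)) (v (((n : ℝ) + 1) * (T / N))))‖)
      atTop (nhds 0) := by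
  have hcont : ContinuousOn (fun p : ℝ × ℝ => S p.1 (G p.2 (v p.2))) (Icc 0 T ×ˢ Icc 0 T) :=
    continuousOn_prod_apply_of_norm_le (continuousOn_semigroup_apply hS0 hSadd hScont hSM) hSM
      (continuousOn_apply_of_norm_sub_le hG hv_cont)
  refine tendsto_sum_range_of_le_mul_mesh hT.le (fun _ _ => norm_nonneg _) fun ε hε => ?_
  obtain ⟨δ, hδ, hunif⟩ := Metric.uniformContinuousOn_iff.1
    ((isCompact_Icc.prod isCompact_Icc).uniformContinuousOn_of_continuous hcont) ε hε
  filter_upwards [eventually_gt_atTop 0,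
    (tendsto_const_div_atTop_nhds_zero_nat T).eventually (gt_mem_nhds hδ)] with N hN hmesh n hn
  have hstep : ((n : ℝ) + 1) * (T / N) - n * (T / N) = T / N := by ring
  have hbT : ((n : ℝ) + 1) * (T / N) ≤ T := by
    calc ((n : ℝ) + 1) * (T / N) ≤ N * (T / N) := by gcongr; exact_mod_cast hn
      _ = T := mul_div_cancel₀ T (by positivity)
  have ha : (0 : ℝ) ≤ n * (T / N) := by positivity
  have hab : (n : ℝ) * (T / N) ≤ (n + 1) * (T / N) := by gcongr; linarith
  have key := norm_sub_semigroup_step_le hcont hunif (hv_mild _ _ ha hab hbT) ha hab hbT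
    (by rwa [hstep])
  rwa [hstep] at key

/-- Consistency of the semi-discrete explicit scheme: the truncation errors
`R^{n+1}_{Δt} = v(t_n) - S(Δt)(v(t_{n+1}) - Δt·G(t_{n+1}, v(t_{n+1})))` of a mild solution
satisfy `∑_{n=0}^{N-1} ‖R^{n+1}_{Δt}‖ → 0` as `N → ∞`. -/
theorem explicit_scheme_consistency
    (d : ℕ) (hd : 1 ≤ d) (T : ℝ) (hT : 0 < T)
    (S : ℝ → (Lp ℝ 2 (volume : Measure (Fin d → ℝ)) →L[ℝ]
              Lp ℝ 2 (volume : Measure (Fin d → ℝ))))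
    (hS0 : S 0 = ContinuousLinearMap.id ℝ _)
    (hSadd : ∀ s t : ℝ, 0 ≤ s → 0 ≤ t → S (t + s) = (S t).comp (S s))
    (hScont : ∀ f : Lp ℝ 2 (volume : Measure (Fin d → ℝ)),
      Tendsto (fun t : ℝ => S t f) (nhdsWithin 0 (Set.Ioi 0)) (nhds f))
    (M : ℝ) (hM : 1 ≤ M) (hSM : ∀ t ∈ Set.Icc (0:ℝ) T, ‖S t‖ ≤ M)
    (L : ℝ) (hL : 0 < L)
    (G : ℝ → Lp ℝ 2 (volume : Measure (Fin d → ℝ)) → Lp ℝ 2 (volume : Measure (Fin d → ℝ)))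
    (hG : ∀ t₁ ∈ Set.Icc (0:ℝ) T, ∀ t₂ ∈ Set.Icc (0:ℝ) T,
      ∀ u w : Lp ℝ 2 (volume : Measure (Fin d → ℝ)),
        ‖G t₁ u - G t₂ w‖ ≤ L * (|t₁ - t₂| + ‖u - w‖))
    (v : ℝ → Lp ℝ 2 (volume : Measure (Fin d → ℝ)))
    (hv_cont : ContinuousOn v (Set.Icc 0 T))
    (hv_mild : ∀ s t : ℝ, 0 ≤ s → s ≤ t → t ≤ T →
      v s = S (t - s) (v t) - ∫ τ in s..t, S (τ - s) (G τ (v τ)))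
    (φ : Lp ℝ 2 (volume : Measure (Fin d → ℝ))) (hφ : v T = φ) :
    Tendsto (fun N : ℕ => ∑ n ∈ Finset.range N,
      ‖v ((n : ℝ) * (T / N)) -
        S (T / N) (v (((n : ℝ) + 1) * (T / N)) -
          (T / N) • G (((n : ℝ) + 1) * (T / N)) (v (((n : ℝ) + 1) * (T / N))))‖)
      atTop (nhds 0) :=
  explicit_scheme_consistency_general d T hT S hS0 hSadd hScont M hSM L G hG v hv_cont hv_mild
end

section
/- For each N, define the semi-discrete explicit scheme v^N = φ and v^n = S(Δt)(v^{n+1} − Δt·G(t_{n+1}, v^{n+1})) for n = N−1, …, 0. Then the scheme converges to the mild solution: max_{0 ≤ n ≤ N} ‖v(t_n) − v^n‖ → 0 as N → ∞. -/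
open MeasureTheory Filter intervalIntegral

private lemma gronwall_aux (Nn : ℕ) (c : ℕ → ℝ) (B q : ℝ) (hq : 0 < q)
    (hrec : ∀ m ≤ Nn, c m ≤ B + q * ∑ i ∈ Finset.range m, c i) :
    ∀ m ≤ Nn, c m ≤ B * (1 + q) ^ m := by
  intro m
  induction m using Nat.strong_induction_on with
  | _ m ih =>
    intro hmN
    calc c m ≤ B + q * ∑ i ∈ Finset.range m, c i := hrec m hmN
    _ ≤ B + q * ∑ i ∈ Finset.range m, B * (1 + q) ^ i := by
        gcongr with i hi
        exact ih i (Finset.mem_range.mp hi) (le_trans (le_of_lt (Finset.mem_range.mp hi)) hmN)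
    _ = B * (1 + q) ^ m := by
        rw [← Finset.mul_sum, geom_sum_eq (by nlinarith : (1:ℝ) + q ≠ 1), add_sub_cancel_left,
          mul_div_assoc', mul_div_assoc', mul_div_cancel_left₀ _ hq.ne']
        ring

set_option maxHeartbeats 2000000 in
/-- Convergence of the semi-discrete explicit scheme `v^N = φ`,
`v^n = S(Δt)(v^{n+1} - Δt·G(t_{n+1}, v^{n+1}))` to the mild solution:
`max_{0 ≤ n ≤ N} ‖v(t_n) - v^n‖ → 0` as `N → ∞`. -/
theorem explicit_scheme_convergence
    (d : ℕ) (hd : 1 ≤ d) (T : ℝ) (hT : 0 < T)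
    (S : ℝ → (Lp ℝ 2 (volume : Measure (Fin d → ℝ)) →L[ℝ]
              Lp ℝ 2 (volume : Measure (Fin d → ℝ))))
    (hS0 : S 0 = ContinuousLinearMap.id ℝ _)
    (hSadd : ∀ s t : ℝ, 0 ≤ s → 0 ≤ t → S (t + s) = (S t).comp (S s))
    (hScont : ∀ f : Lp ℝ 2 (volume : Measure (Fin d → ℝ)),
      Tendsto (fun t : ℝ => S t f) (nhdsWithin 0 (Set.Ioi 0)) (nhds f))
    (M : ℝ) (hM : 1 ≤ M) (hSM : ∀ t ∈ Set.Icc (0:ℝ) T, ‖S t‖ ≤ M)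
    (L : ℝ) (hL : 0 < L)
    (G : ℝ → Lp ℝ 2 (volume : Measure (Fin d → ℝ)) → Lp ℝ 2 (volume : Measure (Fin d → ℝ)))
    (hG : ∀ t₁ ∈ Set.Icc (0:ℝ) T, ∀ t₂ ∈ Set.Icc (0:ℝ) T,
      ∀ u w : Lp ℝ 2 (volume : Measure (Fin d → ℝ)),
        ‖G t₁ u - G t₂ w‖ ≤ L * (|t₁ - t₂| + ‖u - w‖))
    (v : ℝ → Lp ℝ 2 (volume : Measure (Fin d → ℝ)))
    (hv_cont : ContinuousOn v (Set.Icc 0 T))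
    (hv_mild : ∀ s t : ℝ, 0 ≤ s → s ≤ t → t ≤ T →
      v s = S (t - s) (v t) - ∫ τ in s..t, S (τ - s) (G τ (v τ)))
    (φ : Lp ℝ 2 (volume : Measure (Fin d → ℝ))) (hφ : v T = φ)
    -- the semi-discrete explicit scheme, for each number `N` of time steps
    (vd : ℕ → ℕ → Lp ℝ 2 (volume : Measure (Fin d → ℝ)))
    (hvd_terminal : ∀ N : ℕ, vd N N = φ)
    (hvd_step : ∀ N : ℕ, ∀ n < N,
      vd N n = S (T / N) (vd N (n + 1) -
        (T / N) • G (((n : ℝ) + 1) * (T / N)) (vd N (n + 1)))) :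
    Tendsto (fun N : ℕ =>
      (Finset.range (N + 1)).sup' (Finset.nonempty_range_iff.mpr (Nat.succ_ne_zero N))
        (fun n => ‖v ((n : ℝ) * (T / N)) - vd N n‖))
      atTop (nhds 0) := by
  have hM0 : (0:ℝ) < M := lt_of_lt_of_le one_pos hM
  have hT0 : (0:ℝ) ≤ T := hT.le
  -- operator norm bound
  have hb : ∀ a ∈ Set.Icc (0:ℝ) T, ∀ f, ‖S a f‖ ≤ M * ‖f‖ := by
    intro a ha f
    calc ‖S a f‖ ≤ ‖S a‖ * ‖f‖ := (S a).le_opNorm f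
    _ ≤ M * ‖f‖ := by gcongr; exact hSM a ha
  -- semigroup splitting pointwise
  have hsplit : ∀ (a b : ℝ), 0 ≤ a → 0 ≤ b → ∀ f, S (a + b) f = S a (S b f) := by
    intro a b ha hb' f
    rw [hSadd b a hb' ha]; rfl
  -- master estimate
  have hmaster : ∀ (f : Lp ℝ 2 (volume : Measure (Fin d → ℝ))) (a b : ℝ),
      a ∈ Set.Icc 0 T → b ∈ Set.Icc 0 T → ‖S b f - S a f‖ ≤ M * ‖S |b - a| f - f‖ := by
    intro f a b ha hb'
    rcases le_total a b with h | h
    · have e : S b f = S a (S (b - a) f) := by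
        rw [← hsplit a (b - a) ha.1 (by linarith)]
        ring_nf
      rw [e, abs_of_nonneg (by linarith : (0:ℝ) ≤ b - a), ← map_sub]
      exact hb a ha _
    · have e : S a f = S b (S (a - b) f) := by
        rw [← hsplit b (a - b) hb'.1 (by linarith)]
        ring_nf
      rw [norm_sub_rev, e, abs_of_nonpos (by linarith : b - a ≤ 0), neg_sub, ← map_sub]
      exact hb b hb' _
  -- smallness near 0
  have hsmall : ∀ (f : Lp ℝ 2 (volume : Measure (Fin d → ℝ))) (ε : ℝ), 0 < ε →
      ∃ δ > 0, ∀ h : ℝ, 0 ≤ h → h < δ → ‖S h f - f‖ < ε := by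
    intro f ε hε
    obtain ⟨δ, hδ, hh⟩ := Metric.tendsto_nhdsWithin_nhds.mp (hScont f) ε hε
    refine ⟨δ, hδ, fun h h0 hhδ => ?_⟩
    rcases eq_or_lt_of_le h0 with rfl | hpos
    · rw [hS0]; simpa using hε
    · have := hh (Set.mem_Ioi.mpr hpos) (by rwa [Real.dist_eq, sub_zero, abs_of_pos hpos])
      rwa [dist_eq_norm] at this
  -- continuity of τ ↦ G τ (v τ)
  have hgcont : ContinuousOn (fun τ => G τ (v τ)) (Set.Icc 0 T) := by
    rw [Metric.continuousOn_iff]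
    intro a ha ε hε
    obtain ⟨δ1, hδ1, hv1⟩ := Metric.continuousOn_iff.mp hv_cont a ha (ε / (2 * L)) (by positivity)
    refine ⟨min δ1 (ε / (2 * L)), by positivity, fun τ hτ hdist => ?_⟩
    have h1 : ‖v τ - v a‖ < ε / (2 * L) := by
      have := hv1 τ hτ (lt_of_lt_of_le hdist (min_le_left _ _))
      rwa [dist_eq_norm] at this
    have h2 : |τ - a| < ε / (2 * L) := by
      have := lt_of_lt_of_le hdist (min_le_right _ _)
      rwa [Real.dist_eq] at this
    rw [dist_eq_norm]
    calc ‖G τ (v τ) - G a (v a)‖ ≤ L * (|τ - a| + ‖v τ - v a‖) := hG τ hτ a ha _ _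
    _ < L * (ε / (2 * L) + ε / (2 * L)) := by gcongr
    _ = ε := by field_simp; ring
  -- joint continuity of (h, s) ↦ S h (G s (v s))
  have hFcont : ContinuousOn (fun p : ℝ × ℝ => S p.1 (G p.2 (v p.2)))
      (Set.Icc 0 T ×ˢ Set.Icc 0 T) := by
    rw [Metric.continuousOn_iff]
    rintro ⟨a, s⟩ ⟨ha, hs⟩ ε hε
    obtain ⟨δ1, hδ1, h1⟩ := Metric.continuousOn_iff.mp hgcont s hs (ε / (2 * M)) (by positivity)
    obtain ⟨δ2, hδ2, h2⟩ := hsmall (G s (v s)) (ε / (2 * M)) (by positivity)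
    refine ⟨min δ1 δ2, by positivity, ?_⟩
    rintro ⟨b, σ⟩ ⟨hbm, hσ⟩ hdist
    rw [Prod.dist_eq, max_lt_iff] at hdist
    obtain ⟨hd1, hd2⟩ := hdist
    have hba : |b - a| < δ2 := by
      have := lt_of_lt_of_le hd1 (min_le_right _ _); rwa [Real.dist_eq] at this
    have hσs : ‖G σ (v σ) - G s (v s)‖ < ε / (2 * M) := by
      have := h1 σ hσ (lt_of_lt_of_le hd2 (min_le_left _ _)); rwa [dist_eq_norm] at this
    rw [dist_eq_norm]
    calc ‖S b (G σ (v σ)) - S a (G s (v s))‖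
        ≤ ‖S b (G σ (v σ)) - S b (G s (v s))‖ + ‖S b (G s (v s)) - S a (G s (v s))‖ :=
          norm_sub_le_norm_sub_add_norm_sub _ _ _
    _ ≤ M * ‖G σ (v σ) - G s (v s)‖ + M * ‖S |b - a| (G s (v s)) - G s (v s)‖ := by
        gcongr
        · rw [← map_sub]; exact hb b hbm _
        · exact hmaster _ a b ha hbm
    _ < M * (ε / (2 * M)) + M * (ε / (2 * M)) := by
        gcongr
        exact h2 _ (abs_nonneg _) hba
    _ = ε := by field_simp; ring
  -- uniform smallness over the compact range
  have hunif : ∀ ε : ℝ, 0 < ε → ∃ δ > 0, ∀ s ∈ Set.Icc (0:ℝ) T, ∀ h : ℝ,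
      0 ≤ h → h ≤ T → h < δ → ‖S h (G s (v s)) - G s (v s)‖ < ε := by
    intro ε hε
    have hK : IsCompact (Set.Icc (0:ℝ) T ×ˢ Set.Icc (0:ℝ) T) := isCompact_Icc.prod isCompact_Icc
    obtain ⟨δ, hδ, hdd⟩ := Metric.uniformContinuousOn_iff.mp
      (hK.uniformContinuousOn_of_continuous hFcont) ε hε
    refine ⟨δ, hδ, fun s hs h h0 hhT hhδ => ?_⟩
    have := hdd (h, s) ⟨⟨h0, hhT⟩, hs⟩ (0, s) ⟨⟨le_refl 0, hT0⟩, hs⟩ ?_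
    · rw [dist_eq_norm] at this
      simpa [hS0] using this
    · rw [Prod.dist_eq]
      simp only [dist_self, Real.dist_eq, sub_zero, abs_of_nonneg h0]
      exact max_lt hhδ hδ
  -- uniform continuity of v
  have hvunif : ∀ ε : ℝ, 0 < ε → ∃ δ > 0, ∀ a ∈ Set.Icc (0:ℝ) T, ∀ b ∈ Set.Icc (0:ℝ) T,
      |a - b| < δ → ‖v a - v b‖ < ε := by
    intro ε hε
    obtain ⟨δ, hδ, hdd⟩ := Metric.uniformContinuousOn_iff.mp
      (isCompact_Icc.uniformContinuousOn_of_continuous hv_cont) ε hε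
    refine ⟨δ, hδ, fun a ha b hb' hab => ?_⟩
    have := hdd a ha b hb' (by rwa [Real.dist_eq])
    rwa [dist_eq_norm] at this
  -- main part
  rw [Metric.tendsto_atTop]
  intro ε hε
  set Q := Real.exp (M ^ 2 * L * T) with hQdef
  clear_value Q
  have hQ0 : 0 < Q := by rw [hQdef]; exact Real.exp_pos _
  set ε₂ := ε / (6 * (M * T + 1) * Q) with hε₂def
  clear_value ε₂
  have hε₂0 : 0 < ε₂ := by rw [hε₂def]; positivity
  obtain ⟨δE, hδE, hE⟩ := hunif (ε₂ / 2) (by positivity)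
  obtain ⟨δv, hδv, hV⟩ := hvunif (ε₂ / (M * L)) (by positivity)
  set δ := min (min δE δv) (ε₂ / (M * L)) with hδdef
  clear_value δ
  have hδ0 : 0 < δ := by rw [hδdef]; exact lt_min (lt_min hδE hδv) (by positivity)
  obtain ⟨N₁, hN₁⟩ := exists_nat_gt (T / δ)
  refine ⟨max N₁ 1, fun N hN => ?_⟩
  have hN1 : 1 ≤ N := le_trans (le_max_right _ _) hN
  have hNpos : (0:ℝ) < N := by exact_mod_cast hN1
  set Δ := T / (N : ℝ) with hΔdef
  clear_value Δ
  have hΔ0 : 0 < Δ := by rw [hΔdef]; exact div_pos hT hNpos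
  have hΔδ : Δ < δ := by
    have hN₁N : (N₁ : ℝ) ≤ N := by exact_mod_cast le_trans (le_max_left _ _) hN
    have h1 : T / δ < (N : ℝ) := lt_of_lt_of_le hN₁ hN₁N
    rw [div_lt_iff₀ hδ0] at h1
    rw [hΔdef, div_lt_iff₀ hNpos]
    linarith
  have hNΔ : (N : ℝ) * Δ = T := by
    rw [hΔdef]; field_simp
  have hN1' : (1:ℝ) ≤ N := by exact_mod_cast hN1
  have hΔT : Δ ≤ T := by nlinarith [hΔ0, hNΔ]
  have hΔδE : Δ < δE := lt_of_lt_of_le hΔδ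
    (hδdef ▸ le_trans (min_le_left _ _) (min_le_left _ _))
  have hΔδv : Δ < δv := lt_of_lt_of_le hΔδ
    (hδdef ▸ le_trans (min_le_left _ _) (min_le_right _ _))
  have hΔε : Δ < ε₂ / (M * L) := lt_of_lt_of_le hΔδ (hδdef ▸ min_le_right _ _)
  have tmem : ∀ n : ℕ, n ≤ N → (n : ℝ) * Δ ∈ Set.Icc (0:ℝ) T := by
    intro n hn
    constructor
    · positivity
    · have hnN : (n:ℝ) ≤ N := by exact_mod_cast hn
      calc (n : ℝ) * Δ ≤ (N : ℝ) * Δ := mul_le_mul_of_nonneg_right hnN hΔ0.le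
        _ = T := hNΔ
  set a : ℕ → ℝ := fun n => ‖v ((n : ℝ) * Δ) - vd N n‖ with hadef
  clear_value a
  set ρ : ℕ → Lp ℝ 2 (volume : Measure (Fin d → ℝ)) := fun k =>
    Δ • S Δ (G (((k:ℝ) + 1) * Δ) (vd N (k + 1))) -
      ∫ τ in ((k:ℝ) * Δ)..(((k:ℝ) + 1) * Δ), S (τ - (k:ℝ) * Δ) (G τ (v τ)) with hρdef
  clear_value ρ
  -- one-step recursion
  have hstep : ∀ n : ℕ, n < N →
      v ((n:ℝ) * Δ) - vd N n = S Δ (v (((n:ℝ) + 1) * Δ) - vd N (n + 1)) + ρ n := by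
    intro n hn
    have hn' : (n:ℝ) + 1 ≤ (N:ℝ) := by exact_mod_cast hn
    have ht1 : (0:ℝ) ≤ (n:ℝ) * Δ := by positivity
    have ht2 : (n:ℝ) * Δ ≤ ((n:ℝ) + 1) * Δ := by nlinarith
    have ht3 : ((n:ℝ) + 1) * Δ ≤ T := by nlinarith
    have h1 := hv_mild ((n:ℝ) * Δ) (((n:ℝ) + 1) * Δ) ht1 ht2 ht3
    have hdd : ((n:ℝ) + 1) * Δ - (n:ℝ) * Δ = Δ := by ring
    rw [hdd] at h1
    have h2 : vd N n = S Δ (vd N (n + 1)) - Δ • S Δ (G (((n:ℝ) + 1) * Δ) (vd N (n + 1))) := by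
      have := hvd_step N n hn
      rw [← hΔdef] at this
      rw [this, map_sub, (S Δ).map_smul]
    rw [h1, h2]
    simp only [hρdef, map_sub]
    abel
  -- unrolled identity
  have hid : ∀ j n : ℕ, n + j = N →
      v ((n:ℝ) * Δ) - vd N n = ∑ i ∈ Finset.range j, S ((i:ℝ) * Δ) (ρ (n + i)) := by
    intro j
    induction j with
    | zero =>
      intro n hn
      have : n = N := by omega
      subst this
      rw [hNΔ, hφ, hvd_terminal, sub_self]
      simp
    | succ j ih =>
      intro n hn
      have hnN : n < N := by omega
      have ih' := ih (n + 1) (by omega)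
      have hcast : ((n + 1 : ℕ) : ℝ) = (n : ℝ) + 1 := by push_cast; ring
      rw [hcast] at ih'
      rw [hstep n hnN, ih', map_sum, Finset.sum_range_succ']
      congr 1
      · apply Finset.sum_congr rfl
        intro i hi
        have e2 : n + 1 + i = n + (i + 1) := by omega
        have e1 : ((i + 1 : ℕ) : ℝ) * Δ = Δ + (i:ℝ) * Δ := by push_cast; ring
        rw [e2, e1, hsplit Δ ((i:ℝ) * Δ) hΔ0.le (by positivity)]
      · simp [hS0]
  -- bound on the local terms
  have hρbound : ∀ k : ℕ, k < N →
      ‖ρ k‖ ≤ Δ * (3 * ε₂) + Δ * (M * L) * a (k + 1) := by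
    intro k hk
    have htk : (k:ℝ) * Δ ∈ Set.Icc (0:ℝ) T := tmem k (le_of_lt hk)
    have htk1 : ((k:ℝ) + 1) * Δ ∈ Set.Icc (0:ℝ) T := by
      have := tmem (k + 1) hk
      push_cast at this
      exact this
    have ht2 : (k:ℝ) * Δ ≤ ((k:ℝ) + 1) * Δ := by nlinarith
    have hkk : ((k:ℝ) + 1) * Δ = (k:ℝ) * Δ + Δ := by ring
    -- continuity and integrability of the integrand
    have hcont1 : ContinuousOn (fun τ => S (τ - (k:ℝ) * Δ) (G τ (v τ)))
        (Set.Icc ((k:ℝ) * Δ) (((k:ℝ) + 1) * Δ)) := by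
      have hmap : Set.MapsTo (fun τ => (τ - (k:ℝ) * Δ, τ))
          (Set.Icc ((k:ℝ) * Δ) (((k:ℝ) + 1) * Δ)) (Set.Icc 0 T ×ˢ Set.Icc 0 T) := by
        intro τ hτ
        rw [Set.mem_Icc] at hτ
        simp only [Set.mem_prod, Set.mem_Icc]
        refine ⟨⟨by linarith [hτ.1], by linarith [hτ.2, htk.1, hΔT, hkk]⟩,
          le_trans htk.1 hτ.1, le_trans hτ.2 htk1.2⟩
      exact hFcont.comp ((continuous_id.sub continuous_const).prodMk continuous_id).continuousOn hmap
    have hint1 : IntervalIntegrable (fun τ => S (τ - (k:ℝ) * Δ) (G τ (v τ))) volume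
        ((k:ℝ) * Δ) (((k:ℝ) + 1) * Δ) :=
      ContinuousOn.intervalIntegrable (by rwa [Set.uIcc_of_le ht2])
    -- pointwise bound
    have hpt : ∀ τ ∈ Set.uIoc ((k:ℝ) * Δ) (((k:ℝ) + 1) * Δ),
        ‖S Δ (G (((k:ℝ) + 1) * Δ) (v (((k:ℝ) + 1) * Δ))) - S (τ - (k:ℝ) * Δ) (G τ (v τ))‖
          ≤ 3 * ε₂ := by
      intro τ hτ
      rw [Set.uIoc_of_le ht2] at hτ
      have hτm : τ ∈ Set.Icc (0:ℝ) T := ⟨le_trans htk.1 hτ.1.le, le_trans hτ.2 htk1.2⟩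
      have hh0 : 0 ≤ τ - (k:ℝ) * Δ := by linarith [hτ.1]
      have hhΔ : τ - (k:ℝ) * Δ ≤ Δ := by linarith [hτ.2, hkk]
      have hterm1 : ‖S Δ (G (((k:ℝ) + 1) * Δ) (v (((k:ℝ) + 1) * Δ))) - S Δ (G τ (v τ))‖
          ≤ 2 * ε₂ := by
        have hvv : ‖v (((k:ℝ) + 1) * Δ) - v τ‖ < ε₂ / (M * L) := by
          apply hV _ htk1 _ hτm
          have : |((k:ℝ) + 1) * Δ - τ| ≤ Δ := by
            rw [abs_le]; constructor <;> [linarith [hτ.2, hkk]; linarith [hτ.1, hkk]]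
          linarith [hΔδv]
        have h1 : ‖S Δ (G (((k:ℝ) + 1) * Δ) (v (((k:ℝ) + 1) * Δ))) - S Δ (G τ (v τ))‖
            ≤ M * ‖G (((k:ℝ) + 1) * Δ) (v (((k:ℝ) + 1) * Δ)) - G τ (v τ)‖ := by
          rw [← map_sub]; exact hb Δ ⟨hΔ0.le, hΔT⟩ _
        have h2 : ‖G (((k:ℝ) + 1) * Δ) (v (((k:ℝ) + 1) * Δ)) - G τ (v τ)‖
            ≤ L * (|((k:ℝ) + 1) * Δ - τ| + ‖v (((k:ℝ) + 1) * Δ) - v τ‖) :=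
          hG _ htk1 _ hτm _ _
        have h3 : |((k:ℝ) + 1) * Δ - τ| ≤ Δ := by
          rw [abs_le]; constructor <;> [linarith [hτ.2, hkk]; linarith [hτ.1, hkk]]
        have h4 : M * L * Δ < ε₂ := by
          rw [lt_div_iff₀ (by positivity : 0 < M * L)] at hΔε
          nlinarith
        calc ‖S Δ (G (((k:ℝ) + 1) * Δ) (v (((k:ℝ) + 1) * Δ))) - S Δ (G τ (v τ))‖
            ≤ M * (L * (|((k:ℝ) + 1) * Δ - τ| + ‖v (((k:ℝ) + 1) * Δ) - v τ‖)) := by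
              calc _ ≤ M * ‖G (((k:ℝ) + 1) * Δ) (v (((k:ℝ) + 1) * Δ)) - G τ (v τ)‖ := h1
              _ ≤ _ := by gcongr
        _ ≤ 2 * ε₂ := by
            have h5 : ‖v (((k:ℝ) + 1) * Δ) - v τ‖ * (M * L) < ε₂ :=
              (lt_div_iff₀ (by positivity)).mp hvv
            have h6 : M * L * |((k:ℝ) + 1) * Δ - τ| ≤ M * L * Δ :=
              mul_le_mul_of_nonneg_left h3 (by positivity)
            nlinarith [h5, h6, h4]
      have hterm2 : ‖S Δ (G τ (v τ)) - G τ (v τ)‖ < ε₂ / 2 :=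
        hE τ hτm Δ hΔ0.le hΔT hΔδE
      have hterm3 : ‖G τ (v τ) - S (τ - (k:ℝ) * Δ) (G τ (v τ))‖ < ε₂ / 2 := by
        rw [norm_sub_rev]
        exact hE τ hτm _ hh0 (le_trans hhΔ hΔT) (lt_of_le_of_lt hhΔ hΔδE)
      calc ‖S Δ (G (((k:ℝ) + 1) * Δ) (v (((k:ℝ) + 1) * Δ))) - S (τ - (k:ℝ) * Δ) (G τ (v τ))‖
          ≤ ‖S Δ (G (((k:ℝ) + 1) * Δ) (v (((k:ℝ) + 1) * Δ))) - S Δ (G τ (v τ))‖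
            + ‖S Δ (G τ (v τ)) - S (τ - (k:ℝ) * Δ) (G τ (v τ))‖ :=
          norm_sub_le_norm_sub_add_norm_sub _ _ _
      _ ≤ ‖S Δ (G (((k:ℝ) + 1) * Δ) (v (((k:ℝ) + 1) * Δ))) - S Δ (G τ (v τ))‖
            + (‖S Δ (G τ (v τ)) - G τ (v τ)‖ + ‖G τ (v τ) - S (τ - (k:ℝ) * Δ) (G τ (v τ))‖) := by
          gcongr
          exact norm_sub_le_norm_sub_add_norm_sub _ _ _
      _ ≤ 3 * ε₂ := by nlinarith [hterm1, hterm2, hterm3]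
    -- second part: integral error
    have hsecond : ‖Δ • S Δ (G (((k:ℝ) + 1) * Δ) (v (((k:ℝ) + 1) * Δ)))
        - ∫ τ in ((k:ℝ) * Δ)..(((k:ℝ) + 1) * Δ), S (τ - (k:ℝ) * Δ) (G τ (v τ))‖
          ≤ Δ * (3 * ε₂) := by
      have hconst : Δ • S Δ (G (((k:ℝ) + 1) * Δ) (v (((k:ℝ) + 1) * Δ)))
          = ∫ _ in ((k:ℝ) * Δ)..(((k:ℝ) + 1) * Δ),
              S Δ (G (((k:ℝ) + 1) * Δ) (v (((k:ℝ) + 1) * Δ))) := by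
        rw [intervalIntegral.integral_const]
        congr 1
        ring
      rw [hconst, ← intervalIntegral.integral_sub intervalIntegrable_const hint1]
      calc _ ≤ (3 * ε₂) * |((k:ℝ) + 1) * Δ - (k:ℝ) * Δ| :=
            intervalIntegral.norm_integral_le_of_norm_le_const hpt
      _ = Δ * (3 * ε₂) := by
          rw [show ((k:ℝ) + 1) * Δ - (k:ℝ) * Δ = Δ by ring, abs_of_nonneg hΔ0.le]
          ring
    -- first part: Lipschitz error
    have hfirst : ‖Δ • S Δ (G (((k:ℝ) + 1) * Δ) (vd N (k + 1)))
        - Δ • S Δ (G (((k:ℝ) + 1) * Δ) (v (((k:ℝ) + 1) * Δ)))‖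
          ≤ Δ * (M * L) * a (k + 1) := by
      rw [← smul_sub, ← map_sub, norm_smul, Real.norm_eq_abs, abs_of_nonneg hΔ0.le]
      have h1 : ‖S Δ (G (((k:ℝ) + 1) * Δ) (vd N (k + 1))
          - G (((k:ℝ) + 1) * Δ) (v (((k:ℝ) + 1) * Δ)))‖
          ≤ M * ‖G (((k:ℝ) + 1) * Δ) (vd N (k + 1))
            - G (((k:ℝ) + 1) * Δ) (v (((k:ℝ) + 1) * Δ))‖ := hb Δ ⟨hΔ0.le, hΔT⟩ _
      have h2 : ‖G (((k:ℝ) + 1) * Δ) (vd N (k + 1))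
          - G (((k:ℝ) + 1) * Δ) (v (((k:ℝ) + 1) * Δ))‖
          ≤ L * ‖vd N (k + 1) - v (((k:ℝ) + 1) * Δ)‖ := by
        have := hG _ htk1 _ htk1 (vd N (k + 1)) (v (((k:ℝ) + 1) * Δ))
        simpa using this
      have h3 : ‖vd N (k + 1) - v (((k:ℝ) + 1) * Δ)‖ = a (k + 1) := by
        rw [hadef, norm_sub_rev]
        congr 2
        push_cast
        ring
      rw [← h3]
      calc Δ * ‖S Δ (G (((k:ℝ) + 1) * Δ) (vd N (k + 1))
            - G (((k:ℝ) + 1) * Δ) (v (((k:ℝ) + 1) * Δ)))‖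
          ≤ Δ * (M * (L * ‖vd N (k + 1) - v (((k:ℝ) + 1) * Δ)‖)) := by
            apply mul_le_mul_of_nonneg_left _ hΔ0.le
            exact le_trans h1 (by nlinarith [h2, norm_nonneg (vd N (k + 1) - v (((k:ℝ) + 1) * Δ))])
      _ = Δ * (M * L) * ‖vd N (k + 1) - v (((k:ℝ) + 1) * Δ)‖ := by ring
    calc ‖ρ k‖ ≤ ‖Δ • S Δ (G (((k:ℝ) + 1) * Δ) (vd N (k + 1)))
          - Δ • S Δ (G (((k:ℝ) + 1) * Δ) (v (((k:ℝ) + 1) * Δ)))‖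
        + ‖Δ • S Δ (G (((k:ℝ) + 1) * Δ) (v (((k:ℝ) + 1) * Δ)))
          - ∫ τ in ((k:ℝ) * Δ)..(((k:ℝ) + 1) * Δ), S (τ - (k:ℝ) * Δ) (G τ (v τ))‖ := by
          rw [hρdef]
          exact norm_sub_le_norm_sub_add_norm_sub _ _ _
    _ ≤ Δ * (M * L) * a (k + 1) + Δ * (3 * ε₂) := by gcongr -- order?
    _ = Δ * (3 * ε₂) + Δ * (M * L) * a (k + 1) := by ring
  -- summed inequality
  have hq0 : 0 < M ^ 2 * L * Δ := by positivity
  have hanorm : ∀ n : ℕ, n ≤ N →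
      a n ≤ 3 * M * T * ε₂ + (M ^ 2 * L * Δ) * ∑ i ∈ Finset.range (N - n), a (n + i + 1) := by
    intro n hn
    have hidn := hid (N - n) n (by omega)
    have h1 : a n = ‖∑ i ∈ Finset.range (N - n), S ((i:ℝ) * Δ) (ρ (n + i))‖ := by
      rw [hadef]; simp only; rw [hidn]
    rw [h1]
    calc ‖∑ i ∈ Finset.range (N - n), S ((i:ℝ) * Δ) (ρ (n + i))‖
        ≤ ∑ i ∈ Finset.range (N - n), ‖S ((i:ℝ) * Δ) (ρ (n + i))‖ := norm_sum_le _ _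
    _ ≤ ∑ i ∈ Finset.range (N - n), (M * (Δ * (3 * ε₂)) + (M ^ 2 * L * Δ) * a (n + i + 1)) := by
        apply Finset.sum_le_sum
        intro i hi
        have hiR := Finset.mem_range.mp hi
        have h2 : ‖S ((i:ℝ) * Δ) (ρ (n + i))‖ ≤ M * ‖ρ (n + i)‖ :=
          hb _ (tmem i (by omega)) _
        have h3 := hρbound (n + i) (by omega)
        have h4 := mul_le_mul_of_nonneg_left h3 hM0.le
        calc ‖S ((i:ℝ) * Δ) (ρ (n + i))‖ ≤ M * ‖ρ (n + i)‖ := h2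
        _ ≤ M * (Δ * (3 * ε₂) + Δ * (M * L) * a (n + i + 1)) := h4
        _ = M * (Δ * (3 * ε₂)) + (M ^ 2 * L * Δ) * a (n + i + 1) := by ring
    _ = ((N - n : ℕ) : ℝ) * (M * (Δ * (3 * ε₂)))
          + (M ^ 2 * L * Δ) * ∑ i ∈ Finset.range (N - n), a (n + i + 1) := by
        rw [Finset.sum_add_distrib, Finset.sum_const, Finset.card_range, nsmul_eq_mul,
          ← Finset.mul_sum]
    _ ≤ 3 * M * T * ε₂ + (M ^ 2 * L * Δ) * ∑ i ∈ Finset.range (N - n), a (n + i + 1) := by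
        have h5 : ((N - n : ℕ) : ℝ) ≤ (N : ℝ) := by exact_mod_cast Nat.sub_le N n
        have hcard : ((N - n : ℕ) : ℝ) * Δ ≤ T := by
          calc ((N - n : ℕ) : ℝ) * Δ ≤ (N : ℝ) * Δ := mul_le_mul_of_nonneg_right h5 hΔ0.le
          _ = T := hNΔ
        have h6 := mul_le_mul_of_nonneg_left hcard (by positivity : (0:ℝ) ≤ 3 * M * ε₂)
        linarith [h6]
  -- discrete Gronwall
  have hrecm : ∀ m ≤ N, a (N - m) ≤ 3 * M * T * ε₂
      + (M ^ 2 * L * Δ) * ∑ i ∈ Finset.range m, a (N - i) := by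
    intro m hm
    have h1 := hanorm (N - m) (Nat.sub_le N m)
    have h2 : N - (N - m) = m := by omega
    rw [h2] at h1
    have h3 : ∑ i ∈ Finset.range m, a (N - m + i + 1) = ∑ i ∈ Finset.range m, a (N - i) := by
      rw [← Finset.sum_range_reflect (fun i => a (N - i)) m]
      apply Finset.sum_congr rfl
      intro i hi
      have hiR := Finset.mem_range.mp hi
      have he : N - m + i + 1 = N - (m - 1 - i) := by omega
      rw [he]
    rw [h3] at h1
    exact h1
  have hgron := gronwall_aux N (fun m => a (N - m)) (3 * M * T * ε₂) (M ^ 2 * L * Δ) hq0 hrecm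
  -- final bound for each n
  have hfin : ∀ n : ℕ, n ≤ N → a n ≤ 3 * M * T * ε₂ * Q := by
    intro n hn
    have h1 := hgron (N - n) (Nat.sub_le N n)
    rw [show N - (N - n) = n by omega] at h1
    have hpow : (1 + M ^ 2 * L * Δ) ^ (N - n) ≤ Q := by
      calc (1 + M ^ 2 * L * Δ) ^ (N - n) ≤ (1 + M ^ 2 * L * Δ) ^ N :=
          pow_le_pow_right₀ (by nlinarith) (Nat.sub_le N n)
      _ ≤ Real.exp (M ^ 2 * L * Δ) ^ N := by
          apply pow_le_pow_left₀ (by positivity)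
          linarith [Real.add_one_le_exp (M ^ 2 * L * Δ)]
      _ = Real.exp ((N : ℝ) * (M ^ 2 * L * Δ)) := (Real.exp_nat_mul _ N).symm
      _ = Q := by
          rw [hQdef]
          congr 1
          linear_combination (M ^ 2 * L) * hNΔ
    calc a n ≤ 3 * M * T * ε₂ * (1 + M ^ 2 * L * Δ) ^ (N - n) := h1
    _ ≤ 3 * M * T * ε₂ * Q := by
        apply mul_le_mul_of_nonneg_left hpow (by positivity)
  have hεQ : ε₂ * (6 * (M * T + 1) * Q) = ε := by
    rw [hε₂def]; field_simp
  have hlast : 3 * M * T * ε₂ * Q < ε := by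
    nlinarith [mul_pos hε₂0 hQ0, mul_pos (mul_pos hM0 hT) (mul_pos hε₂0 hQ0), hεQ]
  -- conclusion
  have hsup_nonneg : 0 ≤ (Finset.range (N + 1)).sup'
      (Finset.nonempty_range_iff.mpr (Nat.succ_ne_zero N)) a := by
    refine le_trans ?_ (Finset.le_sup' a (Finset.self_mem_range_succ N))
    rw [hadef]
    exact norm_nonneg _
  rw [Real.dist_eq, sub_zero, abs_of_nonneg hsup_nonneg, Finset.sup'_lt_iff]
  intro n hn
  have hnN : n ≤ N := Nat.lt_succ_iff.mp (Finset.mem_range.mp hn)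
  exact lt_of_le_of_lt (hfin n hnN) hlast
end

section
/- For each N, define the truncation errors R^{n+1}_{Δt} = v(t_n) − T_{t_n}(Δt) S(Δt) v(t_{n+1}) for n = 0, …, N−1, where T_{t_n}(Δt)u denotes the unique û ∈ L²(ℝ^d) with û(x) + Δt·g(t_n, x, û(x)) = u(x) a.e. Then the implicit scheme is consistent: ∑_{n=0}^{N−1} ‖R^{n+1}_{Δt}‖ → 0 as N → ∞. -/
/-!
Monotonicity of `g` with `|γ| Δt ≤ 1/2` gives `‖w - T_t(Δt) u‖ ≤ 2 ‖u - w - Δt g(t, w)‖` for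
every `w`, so the `n`-th truncation error is at most twice the residual
`S(Δt) v(t_{n+1}) - v(t_n) - Δt g(t_n, v(t_n))`, which by the mild formulation is
`∫_{t_n}^{t_{n+1}} (S(τ - t_n) g(τ, v(τ)) - g(t_n, v(t_n))) dτ`.
The local Lipschitz bound on `g` makes `τ ↦ g(τ, v(τ))` uniformly continuous on `[0, T)`, so its
range is totally bounded, and on a totally bounded set the locally bounded, strongly continuous
semigroup converges to the identity uniformly. The integrand is therefore small uniformly in `n`
once `Δt` is small, each residual is `o(Δt)`, and the `N = T / Δt` of them sum to `o(1)`.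
-/

open MeasureTheory Filter intervalIntegral

open Set Topology Metric

theorem abs_sub_le_two_mul_abs_of_monotone_step {γ Δ a b ga gb : ℝ}
    (hmono : γ * (a - b) ^ 2 ≤ (ga - gb) * (a - b)) (hΔ : 0 ≤ Δ) (hγΔ : |γ| * Δ ≤ 1 / 2) :
    |b - a| ≤ 2 * |a + Δ * ga - b - Δ * gb| := by
  have hγ : -(1 / 2) ≤ γ * Δ := by nlinarith [neg_abs_le γ]
  -- testing the residual against `a - b` gives `(1 + γΔ)(a - b)² ≤ residual * (a - b)`
  have hkey : (a - b) ^ 2 / 2 ≤ |a + Δ * ga - b - Δ * gb| * |a - b| := by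
    rw [← abs_mul]
    refine le_trans ?_ (le_abs_self _)
    nlinarith [mul_le_mul_of_nonneg_left hmono hΔ, sq_nonneg (a - b)]
  rw [abs_sub_comm]
  nlinarith [abs_nonneg (a - b), sq_abs (a - b), abs_nonneg (a + Δ * ga - b - Δ * gb)]

theorem MeasureTheory.Lp.norm_sub_le_of_monotone_resolvent {α : Type*} [MeasurableSpace α]
    {μ : Measure α} {G : α → ℝ → ℝ} {γ Δ : ℝ}
    (hmono : ∀ x a b, γ * (a - b) ^ 2 ≤ (G x a - G x b) * (a - b))
    (hΔ : 0 ≤ Δ) (hγΔ : |γ| * Δ ≤ 1 / 2) {u û w Gw : Lp ℝ 2 μ}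
    (hû : ∀ᵐ x ∂μ, û x + Δ * G x (û x) = u x) (hGw : ∀ᵐ x ∂μ, Gw x = G x (w x)) :
    ‖w - û‖ ≤ 2 * ‖u - w - Δ • Gw‖ := by
  refine (Lp.norm_le_norm_of_ae_le (g := (2 : ℝ) • (u - w - Δ • Gw)) ?_).trans_eq
    (by rw [norm_smul, Real.norm_two])
  filter_upwards [hû, hGw, Lp.coeFn_sub w û, Lp.coeFn_smul (2 : ℝ) (u - w - Δ • Gw),
    Lp.coeFn_sub (u - w) (Δ • Gw), Lp.coeFn_sub u w, Lp.coeFn_smul Δ Gw]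
    with x hûx hGwx h₁ h₂ h₃ h₄ h₅
  simp only [h₁, h₂, h₃, h₄, h₅, Pi.sub_apply, Pi.smul_apply, smul_eq_mul, Real.norm_eq_abs,
    abs_mul, abs_two, ← hûx, hGwx]
  exact abs_sub_le_two_mul_abs_of_monotone_step (hmono x _ _) hΔ hγΔ

theorem MeasureTheory.Lp.norm_sub_le_of_nemytskii_bound {α : Type*} [MeasurableSpace α]
    {μ : Measure α} {g : ℝ → α → ℝ → ℝ} {c L t₁ t₂ : ℝ} (hL : 0 ≤ L)
    (hlip : ∀ u w : α → ℝ, MemLp u 2 μ → MemLp w 2 μ → eLpNorm u 2 μ ≤ ENNReal.ofReal c →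
      eLpNorm w 2 μ ≤ ENNReal.ofReal c →
      eLpNorm (fun x => g t₁ x (u x) - g t₂ x (w x)) 2 μ ≤
        ENNReal.ofReal (L * (|t₁ - t₂| + (eLpNorm (fun x => u x - w x) 2 μ).toReal)))
    {u w G₁ G₂ : Lp ℝ 2 μ} (hu : ‖u‖ ≤ c) (hw : ‖w‖ ≤ c)
    (hG₁ : ∀ᵐ x ∂μ, G₁ x = g t₁ x (u x)) (hG₂ : ∀ᵐ x ∂μ, G₂ x = g t₂ x (w x)) :
    ‖G₁ - G₂‖ ≤ L * (|t₁ - t₂| + ‖u - w‖) := by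
  have hc : ∀ f : Lp ℝ 2 μ, ‖f‖ ≤ c → eLpNorm f 2 μ ≤ ENNReal.ofReal c := fun f hf => by
    rw [← ENNReal.ofReal_toReal (Lp.eLpNorm_ne_top f), ← Lp.norm_def]
    exact ENNReal.ofReal_le_ofReal hf
  have hG : eLpNorm (G₁ - G₂ : Lp ℝ 2 μ) 2 μ =
      eLpNorm (fun x => g t₁ x (u x) - g t₂ x (w x)) 2 μ := by
    refine eLpNorm_congr_ae ?_
    filter_upwards [Lp.coeFn_sub G₁ G₂, hG₁, hG₂] with x h h₁ h₂
    rw [h, Pi.sub_apply, h₁, h₂]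
  have hbound := hlip u w (Lp.memLp u) (Lp.memLp w) (hc u hu) (hc w hw)
  have hdiff : eLpNorm (fun x => u x - w x) 2 μ = eLpNorm (u - w : Lp ℝ 2 μ) 2 μ :=
    eLpNorm_congr_ae (Lp.coeFn_sub u w).symm
  rw [hdiff, ← Lp.norm_def] at hbound
  rw [Lp.norm_def, hG]
  exact ENNReal.toReal_le_of_le_ofReal (by positivity) hbound

theorem TotallyBounded.image_of_uniformContinuousOn {α β : Type*} [UniformSpace α]
    [UniformSpace β] {f : α → β} {s : Set α} (hs : TotallyBounded s)
    (hf : UniformContinuousOn f s) : TotallyBounded (f '' s) := by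
  have hs' : TotallyBounded (univ : Set s) := by
    rwa [← totallyBounded_image_iff isUniformEmbedding_subtype_val.isUniformInducing,
      image_univ, Subtype.range_coe]
  simpa [image_univ, range_domRestrict] using
    hs'.image (uniformContinuousOn_iff_restrict.mp hf)

theorem UniformContinuousOn.of_dist_le_mul_add_dist {E F : Type*} [PseudoMetricSpace E]
    [PseudoMetricSpace F] {G : ℝ → E} {v : ℝ → F} {s : Set ℝ} {L : ℝ}
    (hv : UniformContinuousOn v s)
    (hG : ∀ t₁ ∈ s, ∀ t₂ ∈ s, dist (G t₁) (G t₂) ≤ L * (dist t₁ t₂ + dist (v t₁) (v t₂))) :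
    UniformContinuousOn G s := by
  rw [Metric.uniformContinuousOn_iff_le] at hv ⊢
  intro ε hε
  obtain ⟨δ, hδ, hvδ⟩ := hv (ε / (2 * (|L| + 1))) (by positivity)
  refine ⟨min δ (ε / (2 * (|L| + 1))), by positivity, fun t₁ h₁ t₂ h₂ ht => ?_⟩
  have hd : dist t₁ t₂ ≤ ε / (2 * (|L| + 1)) := ht.trans (min_le_right _ _)
  have hvd := hvδ t₁ h₁ t₂ h₂ (ht.trans (min_le_left _ _))
  calc dist (G t₁) (G t₂) ≤ |L| * (dist t₁ t₂ + dist (v t₁) (v t₂)) :=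
        (hG t₁ h₁ t₂ h₂).trans (mul_le_mul_of_nonneg_right (le_abs_self L) (by positivity))
    _ ≤ (|L| + 1) * (ε / (2 * (|L| + 1)) + ε / (2 * (|L| + 1))) := by gcongr; linarith
    _ = ε := by field_simp; ring

section StronglyContinuousSemigroup

variable {E : Type*} [NormedAddCommGroup E] [NormedSpace ℝ E] {S : ℝ → E →L[ℝ] E} {T M : ℝ}

theorem continuousAt_semigroup_apply
    (hSadd : ∀ s t : ℝ, 0 ≤ s → 0 ≤ t → S (t + s) = (S t).comp (S s))
    (hScont : ∀ f, Tendsto (fun t => S t f) (𝓝[>] 0) (𝓝 f))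
    (hSM : ∀ t ∈ Icc 0 T, ‖S t‖ ≤ M) (f : E) {s : ℝ} (hs : s ∈ Ioo 0 T) :
    ContinuousAt (fun t => S t f) s := by
  rw [continuousAt_iff_continuous_left_right, ← continuousWithinAt_Iio_iff_Iic,
    ← continuousWithinAt_Ioi_iff_Ici]
  constructor
  · have hgap : Tendsto (fun t => s - t) (𝓝[<] s) (𝓝[>] 0) := by
      refine tendsto_nhdsWithin_iff.2
        ⟨?_, eventually_nhdsWithin_of_forall fun t ht => mem_Ioi.2 (sub_pos.2 ht)⟩
      exact tendsto_nhdsWithin_of_tendsto_nhds (by simpa using (continuous_sub_left s).tendsto s)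
    have hsmall := tendsto_iff_norm_sub_tendsto_zero.1 ((hScont f).comp hgap)
    rw [ContinuousWithinAt, tendsto_iff_norm_sub_tendsto_zero]
    refine squeeze_zero' (Eventually.of_forall fun _ => norm_nonneg _) ?_
      (by simpa using hsmall.const_mul M)
    filter_upwards [Ioo_mem_nhdsLT hs.1] with t ht
    have hsplit : S s f = S t (S (s - t) f) := by
      rw [← ContinuousLinearMap.comp_apply, ← hSadd _ _ (sub_pos.2 ht.2).le ht.1.le,
        add_sub_cancel]
    rw [hsplit, ← map_sub, norm_sub_rev]
    exact ((S t).le_opNorm _).trans (mul_le_mul_of_nonneg_right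
      (hSM t ⟨ht.1.le, ht.2.le.trans hs.2.le⟩) (norm_nonneg _))
  · have hgap : Tendsto (fun t => t - s) (𝓝[>] s) (𝓝[>] 0) := by
      refine tendsto_nhdsWithin_iff.2
        ⟨?_, eventually_nhdsWithin_of_forall fun t ht => mem_Ioi.2 (sub_pos.2 ht)⟩
      exact tendsto_nhdsWithin_of_tendsto_nhds (by simpa using (continuous_sub_right s).tendsto s)
    refine (((S s).continuous.tendsto f).comp ((hScont f).comp hgap)).congr' ?_
    filter_upwards [self_mem_nhdsWithin] with t ht
    rw [Function.comp_apply, Function.comp_apply, ← ContinuousLinearMap.comp_apply,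
      ← hSadd _ _ (sub_pos.2 ht).le hs.1.le, add_sub_cancel]

theorem ContinuousOn.semigroup_apply {X : Type*} [TopologicalSpace X]
    (hSadd : ∀ s t : ℝ, 0 ≤ s → 0 ≤ t → S (t + s) = (S t).comp (S s))
    (hScont : ∀ f, Tendsto (fun t => S t f) (𝓝[>] 0) (𝓝 f))
    (hSM : ∀ t ∈ Icc 0 T, ‖S t‖ ≤ M) {p : X → ℝ} {q : X → E} {A : Set X}
    (hp : ContinuousOn p A) (hq : ContinuousOn q A) (hpA : MapsTo p A (Ioo 0 T)) :
    ContinuousOn (fun x => S (p x) (q x)) A := by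
  intro x hx
  have hfixed : ContinuousWithinAt (fun y => S (p y) (q x)) A x :=
    (continuousAt_semigroup_apply hSadd hScont hSM (q x) (hpA hx)).comp_continuousWithinAt
      (hp x hx)
  rw [ContinuousWithinAt, tendsto_iff_norm_sub_tendsto_zero] at hfixed ⊢
  have hqx := tendsto_iff_norm_sub_tendsto_zero.1 (hq x hx)
  refine squeeze_zero' (Eventually.of_forall fun _ => norm_nonneg _) ?_
    (by simpa using (hqx.const_mul M).add hfixed)
  filter_upwards [self_mem_nhdsWithin] with y hy
  calc ‖S (p y) (q y) - S (p x) (q x)‖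
      ≤ ‖S (p y) (q y - q x)‖ + ‖S (p y) (q x) - S (p x) (q x)‖ := by
        rw [map_sub]; exact norm_sub_le_norm_sub_add_norm_sub _ _ _
    _ ≤ M * ‖q y - q x‖ + ‖S (p y) (q x) - S (p x) (q x)‖ := by
        gcongr
        exact ((S _).le_opNorm _).trans (mul_le_mul_of_nonneg_right
          (hSM _ (Ioo_subset_Icc_self (hpA hy))) (norm_nonneg _))

theorem tendstoUniformlyOn_semigroup_of_totallyBounded (hM : 0 ≤ M)
    (hSM : ∀ᶠ t in 𝓝[>] 0, ‖S t‖ ≤ M) (hScont : ∀ f, Tendsto (fun t => S t f) (𝓝[>] 0) (𝓝 f))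
    {K : Set E} (hK : TotallyBounded K) :
    TendstoUniformlyOn (fun t f => S t f) id (𝓝[>] 0) K := by
  rw [Metric.tendstoUniformlyOn_iff]
  intro ε hε
  set η := ε / (M + 2)
  have hη : 0 < η := by positivity
  obtain ⟨net, hnet, hKnet⟩ := Metric.totallyBounded_iff.1 hK η hη
  have hnear : ∀ᶠ t in 𝓝[>] 0, ∀ y ∈ net, dist (S t y) y < η :=
    (hnet.eventually_all).2 fun y _ => (tendsto_iff_dist_tendsto_zero.1 (hScont y)).eventually
      (gt_mem_nhds hη)
  filter_upwards [hSM, hnear] with t htM htnet f hf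
  obtain ⟨y, hy, hfy⟩ := mem_iUnion₂.1 (hKnet hf)
  rw [mem_ball] at hfy
  have hfar : dist (S t f) (S t y) ≤ M * η := by
    rw [dist_eq_norm, ← map_sub]
    exact ((S t).le_opNorm _).trans
      (mul_le_mul htM (dist_eq_norm f y ▸ hfy.le) (norm_nonneg _) hM)
  calc dist (id f) (S t f) ≤ dist f y + dist (S t y) y + dist (S t f) (S t y) := by
        rw [id, dist_comm f]; linarith [dist_triangle (S t f) (S t y) f, dist_comm y f,
          dist_triangle (S t y) y f]
    _ < η + η + M * η := by linarith [htnet y hy]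
    _ = ε := by simp only [η]; field_simp; ring

theorem intervalIntegrable_semigroup_apply
    (hSadd : ∀ s t : ℝ, 0 ≤ s → 0 ≤ t → S (t + s) = (S t).comp (S s))
    (hScont : ∀ f, Tendsto (fun t => S t f) (𝓝[>] 0) (𝓝 f))
    (hSM : ∀ t ∈ Icc 0 T, ‖S t‖ ≤ M) {G : ℝ → E} {a b C : ℝ} (hab : a ≤ b) (hbT : b - a ≤ T)
    (hG : ContinuousOn G (Ioo a b)) (hGC : ∀ τ ∈ Ioo a b, ‖G τ‖ ≤ C) :
    IntervalIntegrable (fun τ => S (τ - a) (G τ)) volume a b := by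
  have hM : 0 ≤ M := (norm_nonneg _).trans (hSM 0 ⟨le_rfl, by linarith⟩)
  have hmaps : MapsTo (fun τ => τ - a) (Ioo a b) (Ioo 0 T) := fun τ hτ =>
    ⟨sub_pos.2 hτ.1, by linarith [hτ.2]⟩
  have hcont : ContinuousOn (fun τ => S (τ - a) (G τ)) (Ioo a b) :=
    (continuousOn_id.sub continuousOn_const).semigroup_apply hSadd hScont hSM hG hmaps
  rw [intervalIntegrable_iff_integrableOn_Ioo_of_le hab]
  refine IntegrableOn.of_bound measure_Ioo_lt_top (hcont.aestronglyMeasurable measurableSet_Ioo)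
    (M * C) (ae_restrict_of_forall_mem measurableSet_Ioo fun τ hτ => ?_)
  exact ((S _).le_opNorm _).trans
    (mul_le_mul (hSM _ (Ioo_subset_Icc_self (hmaps hτ))) (hGC τ hτ) (norm_nonneg _) hM)

theorem exists_pos_forall_norm_semigroup_apply_sub_le (hM : 0 ≤ M)
    (hSM : ∀ᶠ t in 𝓝[>] 0, ‖S t‖ ≤ M) (hScont : ∀ f, Tendsto (fun t => S t f) (𝓝[>] 0) (𝓝 f))
    {G : ℝ → E} {A : Set ℝ} (hA : TotallyBounded A) (hG : UniformContinuousOn G A)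
    {ε : ℝ} (hε : 0 < ε) :
    ∃ δ > 0, ∀ r ∈ Ioo 0 δ, ∀ t ∈ A, ∀ τ ∈ A, dist τ t < δ → ‖S r (G τ) - G t‖ ≤ ε := by
  set η := ε / (M + 1)
  have hη : 0 < η := by positivity
  have hunif := Metric.tendstoUniformlyOn_iff.1 (tendstoUniformlyOn_semigroup_of_totallyBounded
    hM hSM hScont (hA.image_of_uniformContinuousOn hG)) η hη
  obtain ⟨δ₁, hδ₁, hnear⟩ := (nhdsGT_basis 0).eventually_iff.1 (hSM.and hunif)
  obtain ⟨δ₂, hδ₂, hGδ⟩ := Metric.uniformContinuousOn_iff.1 hG η hη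
  refine ⟨min δ₁ δ₂, lt_min hδ₁ hδ₂, fun r hr t ht τ hτ hτt => ?_⟩
  obtain ⟨hrM, hrG⟩ := hnear ⟨hr.1, hr.2.trans_le (min_le_left _ _)⟩
  have hGτt : ‖G τ - G t‖ ≤ η := by
    rw [← dist_eq_norm]; exact (hGδ τ hτ t ht (hτt.trans_le (min_le_right _ _))).le
  have hSGt : ‖S r (G t) - G t‖ ≤ η := by
    rw [← dist_eq_norm, dist_comm]; exact (hrG (G t) (mem_image_of_mem G ht)).le
  calc ‖S r (G τ) - G t‖ ≤ ‖S r (G τ - G t)‖ + ‖S r (G t) - G t‖ := by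
        rw [map_sub]; exact norm_sub_le_norm_sub_add_norm_sub _ _ _
    _ ≤ M * η + η := add_le_add (((S r).le_opNorm _).trans
        (mul_le_mul hrM hGτt (norm_nonneg _) hM)) hSGt
    _ = ε := by simp only [η]; field_simp

theorem norm_mild_residual_le [CompleteSpace E] {v G : ℝ → E} {a Δ ε : ℝ} (hΔ : 0 ≤ Δ)
    (hmild : v a = S Δ (v (a + Δ)) - ∫ τ in a..a + Δ, S (τ - a) (G τ))
    (hint : IntervalIntegrable (fun τ => S (τ - a) (G τ)) volume a (a + Δ))
    (hε : ∀ τ ∈ Ioo a (a + Δ), ‖S (τ - a) (G τ) - G a‖ ≤ ε) :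
    ‖S Δ (v (a + Δ)) - v a - Δ • G a‖ ≤ ε * Δ := by
  have hres : S Δ (v (a + Δ)) - v a - Δ • G a = ∫ τ in a..a + Δ, S (τ - a) (G τ) - G a := by
    rw [integral_sub hint intervalIntegrable_const, intervalIntegral.integral_const,
      add_sub_cancel_left, hmild, sub_sub_cancel]
  rw [hres]
  refine (norm_integral_le_of_norm_le_const_ae ?_).trans_eq (by rw [add_sub_cancel_left,
    abs_of_nonneg hΔ])
  filter_upwards [Measure.ae_ne volume (a + Δ)] with τ hτ hmem
  rw [uIoc_of_le (by linarith)] at hmem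
  exact hε τ ⟨hmem.1, hmem.2.lt_of_ne hτ⟩

end StronglyContinuousSemigroup

theorem exists_pos_forall_norm_sub_implicitStep_le {α : Type*} [MeasurableSpace α]
    {μ : Measure α} {S : ℝ → Lp ℝ 2 μ →L[ℝ] Lp ℝ 2 μ} {T M γ : ℝ} {g : ℝ → α → ℝ → ℝ}
    {v G : ℝ → Lp ℝ 2 μ} (hT : 0 < T)
    (hSadd : ∀ s t : ℝ, 0 ≤ s → 0 ≤ t → S (t + s) = (S t).comp (S s))
    (hScont : ∀ f, Tendsto (fun t => S t f) (𝓝[>] 0) (𝓝 f))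
    (hSM : ∀ t ∈ Icc 0 T, ‖S t‖ ≤ M)
    (hmono : ∀ t ∈ Ico 0 T, ∀ x a b, γ * (a - b) ^ 2 ≤ (g t x a - g t x b) * (a - b))
    (hG : UniformContinuousOn G (Ico 0 T)) (hGg : ∀ t ∈ Ico 0 T, ∀ᵐ x ∂μ, G t x = g t x (v t x))
    (hmild : ∀ s t, 0 ≤ s → s ≤ t → t ≤ T →
      v s = S (t - s) (v t) - ∫ τ in s..t, S (τ - s) (G τ))
    {ε : ℝ} (hε : 0 < ε) :
    ∃ δ > 0, ∀ a Δ : ℝ, 0 ≤ a → 0 < Δ → Δ < δ → a + Δ ≤ T → |γ| * Δ ≤ 1 / 2 →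
      ∀ û : Lp ℝ 2 μ, (∀ᵐ x ∂μ, û x + Δ * g a x (û x) = S Δ (v (a + Δ)) x) →
        ‖v a - û‖ ≤ ε * Δ := by
  have hM : 0 ≤ M := (norm_nonneg _).trans (hSM 0 ⟨le_rfl, hT.le⟩)
  have hSM' : ∀ᶠ t in 𝓝[>] 0, ‖S t‖ ≤ M := by
    filter_upwards [Ioo_mem_nhdsGT hT] with t ht using hSM t (Ioo_subset_Icc_self ht)
  obtain ⟨C, hC⟩ :=
    ((totallyBounded_Ico 0 T).image_of_uniformContinuousOn hG).isBounded.exists_norm_le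
  obtain ⟨δ, hδ, hδε⟩ := exists_pos_forall_norm_semigroup_apply_sub_le hM hSM' hScont
    (totallyBounded_Ico 0 T) hG (half_pos hε)
  refine ⟨δ, hδ, fun a Δ ha hΔ hΔδ haT hγ û hû => ?_⟩
  have hsub : Ioo a (a + Δ) ⊆ Ico 0 T := fun τ hτ => ⟨ha.trans hτ.1.le, hτ.2.trans_le haT⟩
  have ha' : a ∈ Ico 0 T := ⟨ha, by linarith⟩
  have hint : IntervalIntegrable (fun τ => S (τ - a) (G τ)) volume a (a + Δ) :=
    intervalIntegrable_semigroup_apply hSadd hScont hSM (by linarith) (by linarith)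
      (hG.continuousOn.mono hsub) fun τ hτ => hC _ (mem_image_of_mem G (hsub hτ))
  have hlocal : ∀ τ ∈ Ioo a (a + Δ), ‖S (τ - a) (G τ) - G a‖ ≤ ε / 2 := fun τ hτ =>
    hδε _ ⟨sub_pos.2 hτ.1, by linarith [hτ.2]⟩ a ha' τ (hsub hτ)
      (by rw [Real.dist_eq, abs_of_pos (sub_pos.2 hτ.1)]; linarith [hτ.2])
  have hmild' : v a = S Δ (v (a + Δ)) - ∫ τ in a..a + Δ, S (τ - a) (G τ) := by
    simpa only [add_sub_cancel_left] using hmild a (a + Δ) ha (by linarith) haT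
  calc ‖v a - û‖ ≤ 2 * ‖S Δ (v (a + Δ)) - v a - Δ • G a‖ :=
        Lp.norm_sub_le_of_monotone_resolvent (hmono a ha') hΔ.le hγ hû (hGg a ha')
    _ ≤ 2 * (ε / 2 * Δ) := by gcongr; exact norm_mild_residual_le hΔ.le hmild' hint hlocal
    _ = ε * Δ := by ring

theorem natCast_mul_div_add_div_le {T : ℝ} (hT : 0 ≤ T) {n N : ℕ} (hn : n < N) :
    n * (T / N) + T / N ≤ T := by
  have hN : (N : ℝ) ≠ 0 := Nat.cast_ne_zero.2 (by omega)
  calc n * (T / N) + T / N = (n + 1) * (T / N) := by ring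
    _ ≤ N * (T / N) := by gcongr; exact_mod_cast hn
    _ = T := mul_div_cancel₀ T hN

theorem implicit_scheme_consistency_general
    (d : ℕ) (T : ℝ) (hT : 0 < T)
    (S : ℝ → (Lp ℝ 2 (volume : Measure (Fin d → ℝ)) →L[ℝ]
              Lp ℝ 2 (volume : Measure (Fin d → ℝ))))
    (hSadd : ∀ s t : ℝ, 0 ≤ s → 0 ≤ t → S (t + s) = (S t).comp (S s))
    (hScont : ∀ f : Lp ℝ 2 (volume : Measure (Fin d → ℝ)),
      Tendsto (fun t : ℝ => S t f) (nhdsWithin 0 (Set.Ioi 0)) (nhds f))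
    (M : ℝ) (hSM : ∀ t ∈ Set.Icc (0:ℝ) T, ‖S t‖ ≤ M)
    (g : ℝ → (Fin d → ℝ) → ℝ → ℝ)
    (γ : ℝ)
    (hg_mono : ∀ t ∈ Set.Ico (0:ℝ) T, ∀ x : Fin d → ℝ, ∀ a b : ℝ,
      γ * (a - b) ^ 2 ≤ (g t x a - g t x b) * (a - b))
    (hg_lip : ∀ c : ℝ, 0 ≤ c → ∃ Lc : ℝ, 0 < Lc ∧
      ∀ t₁ ∈ Set.Ico (0:ℝ) T, ∀ t₂ ∈ Set.Ico (0:ℝ) T,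
        ∀ u w : (Fin d → ℝ) → ℝ,
          MemLp u 2 (volume : Measure (Fin d → ℝ)) →
          MemLp w 2 (volume : Measure (Fin d → ℝ)) →
          eLpNorm u 2 (volume : Measure (Fin d → ℝ)) ≤ ENNReal.ofReal c →
          eLpNorm w 2 (volume : Measure (Fin d → ℝ)) ≤ ENNReal.ofReal c →
          eLpNorm (fun x => g t₁ x (u x) - g t₂ x (w x)) 2
              (volume : Measure (Fin d → ℝ)) ≤
            ENNReal.ofReal (Lc * (|t₁ - t₂| +
              (eLpNorm (fun x => u x - w x) 2 (volume : Measure (Fin d → ℝ))).toReal)))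
    -- the mild solution, with `Gv τ` the Nemytskii composition `g(τ,·,v(τ,·))` in `L²`
    (v : ℝ → Lp ℝ 2 (volume : Measure (Fin d → ℝ)))
    (hv_cont : ContinuousOn v (Set.Icc 0 T))
    (Gv : ℝ → Lp ℝ 2 (volume : Measure (Fin d → ℝ)))
    (hGv : ∀ τ ∈ Set.Icc (0:ℝ) T,
      ∀ᵐ x ∂(volume : Measure (Fin d → ℝ)), Gv τ x = g τ x (v τ x))
    (hv_mild : ∀ s t : ℝ, 0 ≤ s → s ≤ t → t ≤ T →
      v s = S (t - s) (v t) - ∫ τ in s..t, S (τ - s) (Gv τ))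
    -- the resolvent values `TS N n = T_{t_n}(Δt) S(Δt) v(t_{n+1})`
    (TS : ℕ → ℕ → Lp ℝ 2 (volume : Measure (Fin d → ℝ)))
    (hTS : ∀ N : ℕ, |γ| * (T / N) ≤ 1 / 2 → ∀ n < N,
      ∀ᵐ x ∂(volume : Measure (Fin d → ℝ)),
        TS N n x + (T / N) * g ((n : ℝ) * (T / N)) x (TS N n x) =
          (S (T / N) (v (((n : ℝ) + 1) * (T / N)))) x) :
    Tendsto (fun N : ℕ => ∑ n ∈ Finset.range N,
      ‖v ((n : ℝ) * (T / N)) - TS N n‖) atTop (nhds 0) := by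
  obtain ⟨c, hc⟩ := isCompact_Icc.exists_bound_of_continuousOn hv_cont
  obtain ⟨L, hL, hLip⟩ := hg_lip (max c 0) (le_max_right _ _)
  have hvc : ∀ t ∈ Ico 0 T, ‖v t‖ ≤ max c 0 := fun t ht =>
    (hc t (Ico_subset_Icc_self ht)).trans (le_max_left _ _)
  have hGv' : ∀ t ∈ Ico 0 T, ∀ᵐ x, Gv t x = g t x (v t x) := fun t ht =>
    hGv t (Ico_subset_Icc_self ht)
  have hGv_uc : UniformContinuousOn Gv (Ico 0 T) :=
    ((isCompact_Icc.uniformContinuousOn_of_continuous hv_cont).mono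
      Ico_subset_Icc_self).of_dist_le_mul_add_dist fun t₁ h₁ t₂ h₂ => by
      simpa only [dist_eq_norm, Real.norm_eq_abs] using Lp.norm_sub_le_of_nemytskii_bound hL.le
        (hLip t₁ h₁ t₂ h₂) (hvc t₁ h₁) (hvc t₂ h₂) (hGv' t₁ h₁) (hGv' t₂ h₂)
  rw [Metric.tendsto_atTop]
  intro ε hε
  obtain ⟨δ, hδ, hstep⟩ := exists_pos_forall_norm_sub_implicitStep_le hT hSadd hScont hSM
    hg_mono hGv_uc hGv' hv_mild (div_pos hε (mul_pos two_pos hT))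
  have hΔ := tendsto_const_div_atTop_nhds_zero_nat T
  have hγΔ : Tendsto (fun N : ℕ => |γ| * (T / N)) atTop (𝓝 0) := by
    simpa using hΔ.const_mul |γ|
  obtain ⟨N₀, hN₀⟩ := eventually_atTop.1 ((eventually_gt_atTop 0).and
    ((hΔ.eventually (gt_mem_nhds hδ)).and (hγΔ.eventually (gt_mem_nhds one_half_pos))))
  refine ⟨N₀, fun N hN => ?_⟩
  obtain ⟨hN0, hNδ, hNγ⟩ := hN₀ N hN
  rw [Real.dist_0_eq_abs, abs_of_nonneg (Finset.sum_nonneg fun _ _ => norm_nonneg _)]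
  calc ∑ n ∈ Finset.range N, ‖v (n * (T / N)) - TS N n‖
      ≤ ∑ n ∈ Finset.range N, ε / (2 * T) * (T / N) := Finset.sum_le_sum fun n hn =>
        hstep _ _ (by positivity) (by positivity) hNδ
          (natCast_mul_div_add_div_le hT.le (Finset.mem_range.1 hn)) hNγ.le _
          (by simpa only [add_one_mul] using hTS N hNγ.le n (Finset.mem_range.1 hn))
    _ = ε / 2 := by
        rw [Finset.sum_const, Finset.card_range, nsmul_eq_mul]; field_simp
    _ < ε := half_lt_self hε

/-- Consistency of the semi-discrete implicit scheme for a maximal monotone driver: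
with `R^{n+1}_{Δt} = v(t_n) - T_{t_n}(Δt) S(Δt) v(t_{n+1})`, where `T_{t_n}(Δt)u` is the
unique `û ∈ L²` with `û + Δt g(t_n,·,û) = u` a.e., one has
`∑_{n=0}^{N-1} ‖R^{n+1}_{Δt}‖ → 0` as `N → ∞`. -/
theorem implicit_scheme_consistency
    (d : ℕ) (hd : 1 ≤ d) (T : ℝ) (hT : 0 < T)
    (S : ℝ → (Lp ℝ 2 (volume : Measure (Fin d → ℝ)) →L[ℝ]
              Lp ℝ 2 (volume : Measure (Fin d → ℝ))))
    (hS0 : S 0 = ContinuousLinearMap.id ℝ _)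
    (hSadd : ∀ s t : ℝ, 0 ≤ s → 0 ≤ t → S (t + s) = (S t).comp (S s))
    (hScont : ∀ f : Lp ℝ 2 (volume : Measure (Fin d → ℝ)),
      Tendsto (fun t : ℝ => S t f) (nhdsWithin 0 (Set.Ioi 0)) (nhds f))
    (M : ℝ) (hM : 1 ≤ M) (hSM : ∀ t ∈ Set.Icc (0:ℝ) T, ‖S t‖ ≤ M)
    (g : ℝ → (Fin d → ℝ) → ℝ → ℝ)
    (hg_meas : Measurable fun p : ℝ × (Fin d → ℝ) × ℝ => g p.1 p.2.1 p.2.2)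
    (γ : ℝ)
    (hg_mono : ∀ t ∈ Set.Ico (0:ℝ) T, ∀ x : Fin d → ℝ, ∀ a b : ℝ,
      γ * (a - b) ^ 2 ≤ (g t x a - g t x b) * (a - b))
    (hg_lip : ∀ c : ℝ, 0 ≤ c → ∃ Lc : ℝ, 0 < Lc ∧
      ∀ t₁ ∈ Set.Ico (0:ℝ) T, ∀ t₂ ∈ Set.Ico (0:ℝ) T,
        ∀ u w : (Fin d → ℝ) → ℝ,
          MemLp u 2 (volume : Measure (Fin d → ℝ)) →
          MemLp w 2 (volume : Measure (Fin d → ℝ)) →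
          eLpNorm u 2 (volume : Measure (Fin d → ℝ)) ≤ ENNReal.ofReal c →
          eLpNorm w 2 (volume : Measure (Fin d → ℝ)) ≤ ENNReal.ofReal c →
          eLpNorm (fun x => g t₁ x (u x) - g t₂ x (w x)) 2
              (volume : Measure (Fin d → ℝ)) ≤
            ENNReal.ofReal (Lc * (|t₁ - t₂| +
              (eLpNorm (fun x => u x - w x) 2 (volume : Measure (Fin d → ℝ))).toReal)))
    (hg0 : MemLp (fun x : Fin d → ℝ => g 0 x 0) 2 (volume : Measure (Fin d → ℝ)))
    (hg_range : ∀ t ∈ Set.Ico (0:ℝ) T, ∀ x : Fin d → ℝ, ∀ lam : ℝ, 0 < lam →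
      Function.Surjective fun y : ℝ => y + lam * g t x y)
    -- the mild solution, with `Gv τ` the Nemytskii composition `g(τ,·,v(τ,·))` in `L²`
    (v : ℝ → Lp ℝ 2 (volume : Measure (Fin d → ℝ)))
    (hv_cont : ContinuousOn v (Set.Icc 0 T))
    (Gv : ℝ → Lp ℝ 2 (volume : Measure (Fin d → ℝ)))
    (hGv : ∀ τ ∈ Set.Icc (0:ℝ) T,
      ∀ᵐ x ∂(volume : Measure (Fin d → ℝ)), Gv τ x = g τ x (v τ x))
    (hv_mild : ∀ s t : ℝ, 0 ≤ s → s ≤ t → t ≤ T →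
      v s = S (t - s) (v t) - ∫ τ in s..t, S (τ - s) (Gv τ))
    (φ : Lp ℝ 2 (volume : Measure (Fin d → ℝ))) (hφ : v T = φ)
    -- the resolvent values `TS N n = T_{t_n}(Δt) S(Δt) v(t_{n+1})`
    (TS : ℕ → ℕ → Lp ℝ 2 (volume : Measure (Fin d → ℝ)))
    (hTS : ∀ N : ℕ, |γ| * (T / N) ≤ 1 / 2 → ∀ n < N,
      ∀ᵐ x ∂(volume : Measure (Fin d → ℝ)),
        TS N n x + (T / N) * g ((n : ℝ) * (T / N)) x (TS N n x) =
          (S (T / N) (v (((n : ℝ) + 1) * (T / N)))) x) :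
    Tendsto (fun N : ℕ => ∑ n ∈ Finset.range N,
      ‖v ((n : ℝ) * (T / N)) - TS N n‖) atTop (nhds 0) :=
  implicit_scheme_consistency_general d T hT S hSadd hScont M hSM g γ hg_mono hg_lip v hv_cont Gv
    hGv hv_mild TS hTS
end
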